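/- Let A be an invertible automaton over the 2-letter alphabet X = {0,1} whose state set splits into two nonempty parts P and Q such that: (i) one of the parts contains all active states and the other contains all inactive states; (ii) for each state in P, both transitions lead to states in the same part (either both into P or both into Q); (iii) for each state in Q, one transition leads into P and the other into Q. Then every element of the automaton group G(A) that can be written as a product (in any order) of an odd number of active generators and an odd number of inactive generators has infinite order; in particular, G(A) is not a torsion group. -/
import Mathlib


/-- An invertible automaton over the two-letter alphabet `Bool`:
a set of states `Q`, a transition map and an output map such that each state
acts on the alphabet by a permutation. -/
structure BinAutomaton (Q : Type*) where
  trans : Q → Bool → Q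
  out : Q → Bool → Bool
  out_bij : ∀ q, Function.Bijective (out q)

namespace BinAutomaton

variable {Q : Type*} (A : BinAutomaton Q)

/-- The action of a state on finite binary words:
`q(xw) = ρ(q,x) · (τ(q,x))(w)`. -/
def act : Q → List Bool → List Bool
  | _, [] => []
  | q, x :: w => A.out q x :: act (A.trans q x) w

theorem act_injective (q : Q) : Function.Injective (A.act q) := by
  intro u
  induction u generalizing q with
  | nil =>
    intro v h
    cases v with
    | nil => rfl
    | cons y v => simp [act] at h
  | cons x u ih =>
    intro v h
    cases v with
    | nil => simp [act] at h
    | cons y v =>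
      simp only [act, List.cons.injEq] at h
      obtain ⟨h1, h2⟩ := h
      obtain rfl : x = y := (A.out_bij q).1 h1
      rw [ih _ h2]

theorem act_surjective (q : Q) : Function.Surjective (A.act q) := by
  intro v
  induction v generalizing q with
  | nil => exact ⟨[], rfl⟩
  | cons y v ih =>
    obtain ⟨x, hx⟩ := (A.out_bij q).2 y
    obtain ⟨w, hw⟩ := ih (A.trans q x)
    exact ⟨x :: w, by simp [act, hx, hw]⟩

/-- The tree automorphism defined by the state `q`. -/
noncomputable def perm (q : Q) : Equiv.Perm (List Bool) :=
  Equiv.ofBijective (A.act q) ⟨A.act_injective q, A.act_surjective q⟩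

/-- The group generated by the automaton: the subgroup of the group of
bijections of the binary tree generated by the states. -/
noncomputable def autGroup : Subgroup (Equiv.Perm (List Bool)) :=
  Subgroup.closure (Set.range A.perm)

end BinAutomaton

/-- Helper constructing a 3-state automaton from the sections at `0`, the
sections at `1`, and the activity of each state. -/
def mkAut3 (t0 t1 : Fin 3 → Fin 3) (actv : Fin 3 → Bool) : BinAutomaton (Fin 3) where
  trans q x := cond x (t1 q) (t0 q)
  out q x := xor (actv q) x
  out_bij q := by
    have h : ∀ b : Bool, Function.Bijective fun x => xor b x := by decide
    exact h (actv q)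


namespace BinAutomataAux

open BinAutomaton

variable {Q : Type*} (A : BinAutomaton Q)

/-- The image of the first letter under the product of a word of states
(the last element of the list acts first, matching `List.prod` of permutations). -/
def outL : List Q → Bool → Bool
  | [], x => x
  | q :: L, x => A.out q (outL L x)

/-- The section word of a product of states at a first letter. -/
def secL : List Q → Bool → List Q
  | [], _ => []
  | q :: L, x => A.trans q (outL A L x) :: secL L x

lemma prodL_apply (L : List Q) (x : Bool) (w : List Bool) :
    (L.map A.perm).prod (x :: w) = outL A L x :: ((secL A L x).map A.perm).prod w := by
  induction L with
  | nil => simp [outL, secL]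
  | cons q L ih =>
    simp only [List.map_cons, List.prod_cons, Equiv.Perm.mul_apply, ih, outL, secL]
    rfl

lemma out_not (hx : ∀ q x, A.out q x = xor (A.out q false) x) (q : Q) (y : Bool) :
    A.out q (!y) = !(A.out q y) := by
  rw [hx q (!y), hx q y]
  cases A.out q false <;> cases y <;> rfl

lemma outL_not (hx : ∀ q x, A.out q x = xor (A.out q false) x) (L : List Q) (x : Bool) :
    outL A L (!x) = !(outL A L x) := by
  induction L with
  | nil => rfl
  | cons q L ih => rw [outL, outL, ih, out_not A hx]

lemma outL_eq (hx : ∀ q x, A.out q x = xor (A.out q false) x) (L : List Q) (x : Bool) :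
    outL A L x = xor (decide (Odd (L.countP fun q => A.out q false))) x := by
  induction L with
  | nil => simp [outL]
  | cons q L ih =>
    rw [outL, ih, hx q, List.countP_cons]
    rcases h : A.out q false with _ | _
    · simp [h]
    · rcases Nat.even_or_odd (L.countP fun q => A.out q false) with he | ho2
      · have e1 : decide (Odd ((L.countP fun q => A.out q false) + 1)) = true :=
          decide_eq_true (Nat.odd_add_one.mpr (Nat.not_odd_iff_even.mpr he))
        have e2 : decide (Odd (L.countP fun q => A.out q false)) = false :=
          decide_eq_false (Nat.not_odd_iff_even.mpr he)
        simp [h, e1, e2]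
      · have e1 : decide (Odd ((L.countP fun q => A.out q false) + 1)) = false :=
          decide_eq_false (by simp [Nat.odd_add_one]; exact ho2)
        have e2 : decide (Odd (L.countP fun q => A.out q false)) = true :=
          decide_eq_true ho2
        simp [h, e1, e2]

lemma countP_sec (hx : ∀ q x, A.out q x = xor (A.out q false) x)
    (p' r : Q → Bool) (hpr : ∀ q, (p' (A.trans q false) != p' (A.trans q true)) = r q)
    (L : List Q) :
    ∃ k, (secL A L true).countP p' + (secL A L false).countP p' = L.countP r + 2 * k := by
  induction L with
  | nil => exact ⟨0, rfl⟩
  | cons q L ih =>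
    obtain ⟨k, hk⟩ := ih
    have ht : outL A L true = !(outL A L false) := outL_not A hx L false
    have hrq := (hpr q).symm
    rcases h0 : p' (A.trans q false) with _ | _ <;>
      rcases h1 : p' (A.trans q true) with _ | _ <;>
      rw [h0, h1] at hrq <;>
      rcases hb : outL A L false with _ | _ <;>
      simp [secL, List.countP_cons, ht, hb, h0, h1, hrq] <;>
      first
        | exact ⟨k, by omega⟩
        | exact ⟨k + 1, by omega⟩

lemma infinite_order (hx : ∀ q x, A.out q x = xor (A.out q false) x)
    (r : Q → Bool)
    (hpr : ∀ q, ((A.out (A.trans q false) false) != (A.out (A.trans q true) false)) = r q)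
    (hrr : ∀ L : List Q, Odd (L.countP fun q => A.out q false) →
        Odd (L.countP fun q => !(A.out q false)) → Odd (L.countP r)) :
    ∀ L : List Q, Odd (L.countP fun q => A.out q false) →
      Odd (L.countP fun q => !(A.out q false)) →
      ¬ IsOfFinOrder ((L.map A.perm).prod) := by
  have hpr' : ∀ q, ((!A.out (A.trans q false) false) != (!A.out (A.trans q true) false)) = r q := by
    intro q
    rw [← hpr q]
    cases A.out (A.trans q false) false <;> cases A.out (A.trans q true) false <;> rfl
  have main : ∀ n : ℕ, ∀ L : List Q, Odd (L.countP fun q => A.out q false) →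
      Odd (L.countP fun q => !(A.out q false)) →
      IsOfFinOrder ((L.map A.perm).prod) → orderOf ((L.map A.perm).prod) ≠ n := by
    intro n
    induction n using Nat.strong_induction_on with
    | _ n ih =>
      intro L h1 h2 hfin hn
      set g := (L.map A.perm).prod with hg
      have hnpos : 0 < n := hn ▸ hfin.orderOf_pos
      have hgn : g ^ n = 1 := hn ▸ pow_orderOf_eq_one g
      -- the next word
      set M := secL A L true ++ secL A L false with hM
      set h := (M.map A.perm).prod with hh
      have ho : outL A L false = true := by
        rw [outL_eq A hx, decide_eq_true h1]; rfl
      have ht : outL A L true = false := by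
        have := outL_not A hx L false
        rw [ho] at this
        simpa using this
      -- g² on words starting with false
      have step2 : ∀ w, g (g (false :: w)) = false :: h w := by
        intro w
        rw [hg, prodL_apply, ho, prodL_apply, ht, hh, hM]
        simp [List.map_append, List.prod_append]
      have hpow : ∀ k w, (g ^ (2 * k)) (false :: w) = false :: (h ^ k) w := by
        intro k
        induction k with
        | zero => intro w; simp
        | succ k ihk =>
          intro w
          have e : 2 * (k + 1) = 2 * k + 2 := by ring
          rw [e, pow_add, pow_two, Equiv.Perm.mul_apply, Equiv.Perm.mul_apply, step2, ihk,
            pow_succ, Equiv.Perm.mul_apply]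
      -- n is even
      have heven : Even n := by
        by_contra hodd
        obtain ⟨k, hk⟩ := Nat.not_even_iff_odd.mp hodd
        have e1 : (g ^ n) (false :: ([] : List Bool)) = false :: [] := by rw [hgn]; rfl
        have e2 : (g ^ n) (false :: ([] : List Bool)) = g ((g ^ (2 * k)) (false :: [])) := by
          rw [hk, pow_succ', Equiv.Perm.mul_apply]
        rw [hpow, hg, prodL_apply, ho] at e2
        rw [e1] at e2
        exact absurd (List.head_eq_of_cons_eq e2.symm) (by simp)
      obtain ⟨k, hk⟩ := heven
      have hk2 : n = 2 * k := by omega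
      have hkpos : 0 < k := by omega
      have hhk : h ^ k = 1 := by
        apply Equiv.ext
        intro w
        have := hpow k w
        rw [← hk2, hgn] at this
        have : false :: w = false :: (h ^ k) w := this
        simpa using this.symm
      have hfin' : IsOfFinOrder h := isOfFinOrder_iff_pow_eq_one.mpr ⟨k, hkpos, hhk⟩
      have hord : orderOf h ≤ k := Nat.le_of_dvd hkpos (orderOf_dvd_of_pow_eq_one hhk)
      have hlt : orderOf h < n := by omega
      -- M is good
      have hM1 : Odd (M.countP fun q => A.out q false) := by
        obtain ⟨k1, hk1⟩ := countP_sec A hx (fun q => A.out q false) r hpr L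
        rw [hM, List.countP_append, hk1]
        exact (hrr L h1 h2).add_even (even_two_mul k1)
      have hM2 : Odd (M.countP fun q => !(A.out q false)) := by
        obtain ⟨k1, hk1⟩ := countP_sec A hx (fun q => !(A.out q false)) r hpr' L
        rw [hM, List.countP_append, hk1]
        exact (hrr L h1 h2).add_even (even_two_mul k1)
      exact ih (orderOf h) hlt M hM1 hM2 hfin' rfl
  intro L h1 h2 hfin
  exact main (orderOf ((L.map A.perm).prod)) L h1 h2 hfin rfl


end BinAutomataAux


/-- Proposition: if the states of an invertible binary automaton split into two
nonempty parts `P` and `R` such that (i) one part contains all active states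
and the other all inactive states, (ii) both transitions from any state of `P`
lead into the same part, and (iii) from any state of `R` one transition leads
into `P` and the other into `R`, then every product (in any order) of an odd
number of active generators and an odd number of inactive generators has
infinite order; in particular the automaton group is not a torsion group. -/
theorem automaton_group_not_torsion {Q : Type*} [Fintype Q] (A : BinAutomaton Q)
    (P R : Set Q) (hP : P.Nonempty) (hR : R.Nonempty)
    (hcover : P ∪ R = Set.univ) (hdisj : Disjoint P R)
    (hact : ((∀ q ∈ P, ∀ x, A.out q x = !x) ∧ (∀ q ∈ R, ∀ x, A.out q x = x)) ∨
            ((∀ q ∈ P, ∀ x, A.out q x = x) ∧ (∀ q ∈ R, ∀ x, A.out q x = !x)))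
    (hii : ∀ q ∈ P, (A.trans q false ∈ P ∧ A.trans q true ∈ P) ∨
                    (A.trans q false ∈ R ∧ A.trans q true ∈ R))
    (hiii : ∀ q ∈ R, (A.trans q false ∈ P ∧ A.trans q true ∈ R) ∨
                     (A.trans q false ∈ R ∧ A.trans q true ∈ P)) :
    (∀ L : List Q,
      Odd (L.countP fun q => A.out q false) →
      Odd (L.countP fun q => !(A.out q false)) →
      ¬ IsOfFinOrder (L.map A.perm).prod) ∧
    ∃ g ∈ A.autGroup, ¬ IsOfFinOrder g := by
  have hq : ∀ q : Q, q ∈ P ∨ q ∈ R := by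
    intro q
    have : q ∈ P ∪ R := by rw [hcover]; trivial
    exact this
  have hmain : ∀ L : List Q, Odd (L.countP fun q => A.out q false) →
      Odd (L.countP fun q => !(A.out q false)) →
      ¬ IsOfFinOrder ((L.map A.perm).prod) := by
    rcases hact with ⟨hPa, hRa⟩ | ⟨hPa, hRa⟩
    · -- P consists of active states
      have hx : ∀ q x, A.out q x = xor (A.out q false) x := by
        intro q x
        rcases hq q with h | h
        · simp only [hPa q h]; cases x <;> rfl
        · simp only [hRa q h]; cases x <;> rfl
      apply BinAutomataAux.infinite_order A hx (fun q => !(A.out q false))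
      · intro q
        rcases hq q with h | h
        · simp only [hPa q h]
          rcases hii q h with ⟨c0, c1⟩ | ⟨c0, c1⟩
          · simp only [hPa _ c0, hPa _ c1]; rfl
          · simp only [hRa _ c0, hRa _ c1]; rfl
        · simp only [hRa q h]
          rcases hiii q h with ⟨c0, c1⟩ | ⟨c0, c1⟩
          · simp only [hPa _ c0, hRa _ c1]; rfl
          · simp only [hRa _ c0, hPa _ c1]; rfl
      · exact fun L _ h2 => h2
    · -- R consists of active states
      have hx : ∀ q x, A.out q x = xor (A.out q false) x := by
        intro q x
        rcases hq q with h | h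
        · simp only [hPa q h]; cases x <;> rfl
        · simp only [hRa q h]; cases x <;> rfl
      apply BinAutomataAux.infinite_order A hx (fun q => A.out q false)
      · intro q
        rcases hq q with h | h
        · simp only [hPa q h]
          rcases hii q h with ⟨c0, c1⟩ | ⟨c0, c1⟩
          · simp only [hPa _ c0, hPa _ c1]; rfl
          · simp only [hRa _ c0, hRa _ c1]; rfl
        · simp only [hRa q h]
          rcases hiii q h with ⟨c0, c1⟩ | ⟨c0, c1⟩
          · simp only [hPa _ c0, hRa _ c1]; rfl
          · simp only [hRa _ c0, hPa _ c1]; rfl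
      · exact fun L h1 _ => h1
  refine ⟨hmain, ?_⟩
  obtain ⟨p, hp⟩ := hP
  obtain ⟨s, hs⟩ := hR
  refine ⟨([p, s].map A.perm).prod, ?_, ?_⟩
  · have e : ([p, s].map A.perm).prod = A.perm p * A.perm s := by simp
    rw [e]
    exact mul_mem (Subgroup.subset_closure ⟨p, rfl⟩) (Subgroup.subset_closure ⟨s, rfl⟩)
  · apply hmain
    · rcases hact with ⟨hPa, hRa⟩ | ⟨hPa, hRa⟩ <;>
        simp [List.countP_cons, hPa p hp, hRa s hs]
    · rcases hact with ⟨hPa, hRa⟩ | ⟨hPa, hRa⟩ <;>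
        simp [List.countP_cons, hPa p hp, hRa s hs]
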